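/- Let γ > 1 and define f(x) := (1/(γ+1))·(2γx − (γ−1))·((γ−1)/(γ+1) + 2/((γ+1)·x))^γ for x > 0. Then f(1) = 1, and for all x > 0 the derivative satisfies f'(x) = (2γ(γ−1)/(γ+1)²)·((γ−1)/(γ+1) + 2/((γ+1)·x))^{γ−1}·(1/x − 1)². Consequently f'(x) > 0 for all x > 0 with x ≠ 1, and f(x) > 1 for all x > 1. -/

import Mathlib

/-- For `γ > 1`, the entropy-ratio function
`f(x) = (1/(γ+1))(2γx − (γ−1))((γ−1)/(γ+1) + 2/((γ+1)x))^γ` satisfies `f(1) = 1`,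
its derivative on `(0,∞)` is
`f'(x) = (2γ(γ−1)/(γ+1)²)((γ−1)/(γ+1) + 2/((γ+1)x))^{γ−1}(1/x − 1)²`,
hence `f'(x) > 0` for `x > 0`, `x ≠ 1`, and `f(x) > 1` for `x > 1`. -/
theorem stmt3 (γ : ℝ) (hγ : 1 < γ) :
    let f : ℝ → ℝ := fun x => 1 / (γ + 1) * (2 * γ * x - (γ - 1)) *
      ((γ - 1) / (γ + 1) + 2 / ((γ + 1) * x)) ^ γ
    let f' : ℝ → ℝ := fun x => 2 * γ * (γ - 1) / (γ + 1) ^ 2 *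
      ((γ - 1) / (γ + 1) + 2 / ((γ + 1) * x)) ^ (γ - 1) * (1 / x - 1) ^ 2
    f 1 = 1 ∧
    (∀ x : ℝ, 0 < x → HasDerivAt f (f' x) x) ∧
    (∀ x : ℝ, 0 < x → x ≠ 1 → 0 < deriv f x) ∧
    (∀ x : ℝ, 1 < x → 1 < f x) := by
  intro f f'
  have hγ1 : (0:ℝ) < γ + 1 := by linarith
  have hg : ∀ x : ℝ, 0 < x → 0 < (γ - 1) / (γ + 1) + 2 / ((γ + 1) * x) := by
    intro x hx
    exact add_pos (div_pos (by linarith) hγ1) (div_pos two_pos (mul_pos hγ1 hx))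
  have hf1 : f 1 = 1 := by
    show 1 / (γ + 1) * (2 * γ * 1 - (γ - 1)) *
      ((γ - 1) / (γ + 1) + 2 / ((γ + 1) * 1)) ^ γ = 1
    have h1 : (γ - 1) / (γ + 1) + 2 / ((γ + 1) * 1) = 1 := by
      field_simp
      ring
    rw [h1, Real.one_rpow]
    field_simp
    ring
  have hd : ∀ x : ℝ, 0 < x → HasDerivAt f (f' x) x := by
    intro x hx
    have hgx := hg x hx
    have hinv : HasDerivAt (fun y : ℝ => y⁻¹) (-(x^2)⁻¹) x := hasDerivAt_inv hx.ne'
    have hgd' := (hinv.const_mul (2/(γ+1))).const_add ((γ-1)/(γ+1))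
    have heq : (fun y : ℝ => (γ-1)/(γ+1) + 2/(γ+1) * y⁻¹)
        = fun y : ℝ => (γ-1)/(γ+1) + 2/((γ+1)*y) := by
      funext y; rw [← div_eq_mul_inv, div_div]
    rw [heq] at hgd'
    have hu : HasDerivAt (fun y : ℝ => 1/(γ+1) * (2*γ*y - (γ-1)))
        (1/(γ+1) * (2*γ*1)) x := by
      simpa using (((hasDerivAt_id x).const_mul (2*γ)).sub_const (γ-1)).const_mul (1/(γ+1))
    have hpow := hgd'.rpow_const (p := γ) (Or.inl hgx.ne')
    have hf := hu.mul hpow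
    refine (hf.congr_deriv ?_ : HasDerivAt f _ x)
    symm
    have hsplit : ((γ - 1) / (γ + 1) + 2 / ((γ + 1) * x)) ^ γ
        = ((γ - 1) / (γ + 1) + 2 / ((γ + 1) * x)) ^ (γ - 1)
          * ((γ - 1) / (γ + 1) + 2 / ((γ + 1) * x)) := by
      rw [← Real.rpow_add_one hgx.ne']; ring_nf
    show 2 * γ * (γ - 1) / (γ + 1) ^ 2 *
      ((γ - 1) / (γ + 1) + 2 / ((γ + 1) * x)) ^ (γ - 1) * (1 / x - 1) ^ 2 = _
    rw [hsplit]
    set A := ((γ - 1) / (γ + 1) + 2 / ((γ + 1) * x)) ^ (γ - 1) with hA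
    field_simp
    ring
  refine ⟨hf1, hd, ?_, ?_⟩
  · intro x hx hx1
    rw [(hd x hx).deriv]
    have hgx := hg x hx
    have hne : 1/x - 1 ≠ 0 := by
      intro h
      apply hx1
      have h1 : 1/x = 1 := by linarith
      rw [div_eq_one_iff_eq hx.ne'] at h1
      exact h1.symm
    have h1 : 0 < 2 * γ * (γ - 1) / (γ + 1) ^ 2 := by
      apply div_pos (by nlinarith) (by positivity)
    exact mul_pos (mul_pos h1 (Real.rpow_pos_of_pos hgx _))
      (lt_of_le_of_ne (sq_nonneg _) (Ne.symm (pow_ne_zero 2 hne)))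
  · intro x hx
    have hcont : ContinuousOn f (Set.Ici 1) := fun y hy =>
      ((hd y (lt_of_lt_of_le one_pos hy)).continuousAt).continuousWithinAt
    have hderivpos : ∀ y ∈ interior (Set.Ici (1:ℝ)), 0 < deriv f y := by
      intro y hy
      rw [interior_Ici] at hy
      rw [(hd y (lt_trans one_pos hy)).deriv]
      have hgy := hg y (lt_trans one_pos hy)
      have hy1 : 1 < y := hy
      have hne : 1/y - 1 ≠ 0 := by
        intro h
        have h1 : 1/y = 1 := by linarith
        rw [div_eq_one_iff_eq (by positivity : y ≠ 0)] at h1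
        linarith
      have h1 : 0 < 2 * γ * (γ - 1) / (γ + 1) ^ 2 := by
        apply div_pos (by nlinarith) (by positivity)
      exact mul_pos (mul_pos h1 (Real.rpow_pos_of_pos hgy _))
        (lt_of_le_of_ne (sq_nonneg _) (Ne.symm (pow_ne_zero 2 hne)))
    have hmono := strictMonoOn_of_deriv_pos (convex_Ici 1) hcont hderivpos
    have := hmono Set.self_mem_Ici (le_of_lt hx : x ∈ Set.Ici 1) hx
    rwa [hf1] at this
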